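/- Let n ≥ 1 and let σ, τ be permutations of Fin n, each satisfying ℓ(σ) + ℓ(σ⁻¹ * s) = n − 1 and ℓ(τ) + ℓ(τ⁻¹ * s) = n − 1, such that every σ-orbit is contained in a τ-orbit and c(σ) = c(τ) + 1 (the orbit partition of σ is obtained from that of τ by splitting one block into two). Then τ * σ⁻¹ is a transposition; in particular ℓ(σ⁻¹ * τ) = 1. -/

import Mathlib

/-- Minimal number of transpositions whose product is `σ` (0 for the identity);
this is the graph distance from the identity to `σ` in the Cayley graph of the
symmetric group on `Fin n` generated by all transpositions. -/
noncomputable def swapLength (n : ℕ) (σ : Equiv.Perm (Fin n)) : ℕ :=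
  sInf {k | ∃ l : List (Equiv.Perm (Fin n)),
    l.length = k ∧ (∀ t ∈ l, t.IsSwap) ∧ l.prod = σ}

/-- Number of orbits of `σ` acting on `Fin n` (fixed points count as orbits). -/
noncomputable def orbitCount (n : ℕ) (σ : Equiv.Perm (Fin n)) : ℕ :=
  Nat.card (MulAction.orbitRel.Quotient (Subgroup.zpowers σ) (Fin n))

namespace NC
open Equiv Equiv.Perm

variable {n : ℕ}

/-! ### cyclic distance on `Fin n` -/

def dd (a b : Fin n) : ℕ := (b - a).val

lemma dd_def (a b : Fin n) :
    dd a b = if a.val ≤ b.val then b.val - a.val else b.val + n - a.val := by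
  have ha := a.isLt
  have hb := b.isLt
  have h : (b - a).val = (n - a.val + b.val) % n := by rw [Fin.sub_def]
  unfold dd
  rw [h]
  rcases le_or_gt a.val b.val with hle | hlt
  · have e : n - a.val + b.val = (b.val - a.val) + 1 * n := by omega
    rw [e, Nat.add_mul_mod_self_right, Nat.mod_eq_of_lt (by omega)]
    simp [hle]
  · have e : n - a.val + b.val = b.val + n - a.val := by omega
    rw [e, Nat.mod_eq_of_lt (by omega)]
    simp [Nat.not_le.mpr hlt]

lemma dd_lt (a b : Fin n) : dd a b < n := (b - a).isLt

lemma dd_eq_zero_iff {a b : Fin n} : dd a b = 0 ↔ a = b := by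
  have ha := a.isLt; have hb := b.isLt
  rw [dd_def, Fin.ext_iff]
  split_ifs <;> omega

lemma dd_add3 (a b c : Fin n) :
    dd a b + dd b c = dd a c ∨ dd a b + dd b c = dd a c + n := by
  have ha := a.isLt; have hb := b.isLt; have hc := c.isLt
  rw [dd_def, dd_def, dd_def]
  split_ifs <;> omega

lemma dd_inj {a u v : Fin n} (h : dd a u = dd a v) : u = v := by
  have ha := a.isLt; have hu := u.isLt; have hv := v.isLt
  rw [dd_def, dd_def] at h
  rw [Fin.ext_iff]
  split_ifs at h <;> omega

lemma dd_pos {a b : Fin n} (h : a ≠ b) : 0 < dd a b := by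
  rcases Nat.eq_zero_or_pos (dd a b) with h0 | h0
  · exact absurd (dd_eq_zero_iff.mp h0) h
  · exact h0

lemma dd_self (a : Fin n) : dd a a = 0 := dd_eq_zero_iff.mpr rfl

/-- the two "cells" cover everything -/
lemma dd_dichotomy {A B : Fin n} (h : A ≠ B) (w : Fin n) :
    dd A w < dd A B ∨ dd B w < dd B A := by
  by_contra hcon
  push_neg at hcon
  obtain ⟨h1, h2⟩ := hcon
  have hAB := dd_pos h
  have hBA := dd_pos (Ne.symm h)
  have hn : dd A B + dd B A = n := by
    rcases dd_add3 A B A with h3 | h3 <;> rw [dd_self] at h3 <;> omega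
  rcases dd_add3 A B w with h4 | h4
  · have := dd_lt A w; omega
  · have := dd_lt B w; omega

lemma dd_val (a b : Fin n) : dd a b = (b - a).val := rfl

attribute [irreducible] dd

/-! ### SameCycle helpers -/

lemma sc_of_pow {f : Equiv.Perm (Fin n)} {x y : Fin n} (i : ℕ) (h : (f ^ i) x = y) :
    f.SameCycle x y := ⟨(i : ℤ), by rw [zpow_natCast]; exact h⟩

lemma pow_succ_apply (f : Equiv.Perm (Fin n)) (i : ℕ) (x : Fin n) :
    (f ^ (i + 1)) x = f ((f ^ i) x) := by
  rw [pow_succ']; rfl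

lemma pointwise_le_aux {f g : Equiv.Perm (Fin n)} (h : ∀ x, g.SameCycle x (f x))
    (x : Fin n) : ∀ i : ℕ, g.SameCycle x ((f ^ i) x) := by
  intro i
  induction i with
  | zero => exact SameCycle.refl g x
  | succ i ih =>
    rw [pow_succ_apply]
    exact ih.trans (h _)

lemma pointwise_le {f g : Equiv.Perm (Fin n)} (h : ∀ x, g.SameCycle x (f x)) :
    ∀ x y, f.SameCycle x y → g.SameCycle x y := by
  intro x y hxy
  obtain ⟨i, _, rfl⟩ := hxy.exists_pow_eq'
  exact pointwise_le_aux h x i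

lemma pow_fixed {f : Equiv.Perm (Fin n)} {a : Fin n} (ha : f a = a) :
    ∀ i : ℕ, (f ^ i) a = a := by
  intro i
  induction i with
  | zero => rfl
  | succ i ih => rw [pow_succ_apply, ih, ha]

lemma fixed_sc {f : Equiv.Perm (Fin n)} {a y : Fin n} (ha : f a = a)
    (h : f.SameCycle a y) : y = a := by
  obtain ⟨i, _, rfl⟩ := h.exists_pow_eq'
  exact pow_fixed ha i

/-! ### orbit counting -/

def cyc (f : Equiv.Perm (Fin n)) : Setoid (Fin n) :=
  ⟨f.SameCycle, ⟨fun x => SameCycle.refl f x, fun h => h.symm, fun h h' => h.trans h'⟩⟩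

lemma orbitCount_eq (f : Equiv.Perm (Fin n)) :
    orbitCount n f = Nat.card (Quotient (cyc f)) := by
  refine Nat.card_congr (Quotient.congrRight ?_)
  intro a b
  constructor
  · rintro ⟨⟨g, k, hk⟩, hg⟩
    have : (f ^ k) b = a := by
      have : g • b = a := hg
      rw [← hk] at this
      exact this
    have hsc : f.SameCycle b a := ⟨k, this⟩
    exact hsc.symm
  · rintro ⟨k, hk⟩
    exact ⟨⟨f ^ (-k), ⟨-k, rfl⟩⟩, by
      show (f ^ (-k)) b = a
      rw [← hk, ← Equiv.Perm.mul_apply, ← zpow_add]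
      simp⟩

lemma count_le_of_le {f g : Equiv.Perm (Fin n)} (h : ∀ x y, f.SameCycle x y → g.SameCycle x y) :
    Nat.card (Quotient (cyc g)) ≤ Nat.card (Quotient (cyc f)) := by
  apply Nat.card_le_card_of_surjective (Quotient.map' id (fun x y hxy => h x y hxy))
  intro q
  induction q using Quotient.inductionOn' with
  | h a => exact ⟨Quotient.mk'' a, rfl⟩

lemma count_lt_of_split {f g : Equiv.Perm (Fin n)} {a b : Fin n}
    (h : ∀ x y, f.SameCycle x y → g.SameCycle x y)
    (hab : g.SameCycle a b) (hnab : ¬ f.SameCycle a b) :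
    Nat.card (Quotient (cyc g)) < Nat.card (Quotient (cyc f)) := by
  letI : Fintype (Quotient (cyc f)) := Fintype.ofFinite _
  letI : Fintype (Quotient (cyc g)) := Fintype.ofFinite _
  rw [Nat.card_eq_fintype_card, Nat.card_eq_fintype_card]
  apply Fintype.card_lt_of_surjective_not_injective
    (Quotient.map' id (fun x y hxy => h x y hxy))
  · intro q
    induction q using Quotient.inductionOn' with
    | h a => exact ⟨Quotient.mk'' a, rfl⟩
  · intro hinj
    apply hnab
    have : (Quotient.mk'' a : Quotient (cyc f)) = Quotient.mk'' b := by
      apply hinj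
      exact Quotient.sound' hab
    exact Quotient.exact' this

lemma count_le_succ_of_join {f g : Equiv.Perm (Fin n)} {a b : Fin n}
    (hcoarse : ∀ x y, f.SameCycle x y → g.SameCycle x y)
    (hjoin : ∀ x y, g.SameCycle x y →
      f.SameCycle x y ∨ (f.SameCycle x a ∧ f.SameCycle b y) ∨ (f.SameCycle x b ∧ f.SameCycle a y)) :
    Nat.card (Quotient (cyc f)) ≤ Nat.card (Quotient (cyc g)) + 1 := by
  letI : Fintype (Quotient (cyc f)) := Fintype.ofFinite _
  letI : Fintype (Quotient (cyc g)) := Fintype.ofFinite _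
  rw [Nat.card_eq_fintype_card, Nat.card_eq_fintype_card]
  classical
  have key : ∀ X Y : Quotient (cyc f),
      (Quotient.map' id (fun x y hxy => hcoarse x y hxy) X : Quotient (cyc g)) =
      Quotient.map' id (fun x y hxy => hcoarse x y hxy) Y →
      X = Y ∨ (X = Quotient.mk'' a ∨ X = Quotient.mk'' b) := by
    intro X Y hXY
    induction X using Quotient.inductionOn' with
    | h x =>
    induction Y using Quotient.inductionOn' with
    | h y =>
    have hg : g.SameCycle x y := Quotient.exact' hXY
    rcases hjoin x y hg with h1 | h2 | h3
    · exact Or.inl (Quotient.sound' h1)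
    · exact Or.inr (Or.inl (Quotient.sound' h2.1))
    · exact Or.inr (Or.inr (Quotient.sound' h3.1))
  have key2 : ∀ X Y : Quotient (cyc f), X ≠ Quotient.mk'' b → Y ≠ Quotient.mk'' b →
      (Quotient.map' id (fun x y hxy => hcoarse x y hxy) X : Quotient (cyc g)) =
      Quotient.map' id (fun x y hxy => hcoarse x y hxy) Y → X = Y := by
    intro X Y hX hY hXY
    rcases key X Y hXY with h | h | h
    · exact h
    · rcases key Y X hXY.symm with h' | h' | h'
      · exact h'.symm
      · rw [h, h']
      · exact absurd h' hY
    · exact absurd h hX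
  have h2 : Fintype.card {X : Quotient (cyc f) // ¬ X = Quotient.mk'' b}
      ≤ Fintype.card (Quotient (cyc g)) := by
    apply Fintype.card_le_of_injective
      (fun X => Quotient.map' id (fun x y hxy => hcoarse x y hxy) X.val)
    rintro ⟨X, hX⟩ ⟨Y, hY⟩ hXY
    exact Subtype.ext (key2 X Y hX hY hXY)
  have h3 := Fintype.card_subtype_compl (fun X : Quotient (cyc f) => X = Quotient.mk'' b)
  have h4 : Fintype.card {X : Quotient (cyc f) // X = Quotient.mk'' b} = 1 := by
    have : Subsingleton {X : Quotient (cyc f) // X = Quotient.mk'' b} :=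
      ⟨fun ⟨x, hx⟩ ⟨y, hy⟩ => Subtype.ext (hx.trans hy.symm)⟩
    have hne : Nonempty {X : Quotient (cyc f) // X = Quotient.mk'' b} := ⟨⟨_, rfl⟩⟩
    have := Fintype.card_le_one_iff_subsingleton.mpr this
    have := Fintype.card_pos_iff.mpr hne
    omega
  have h5 : 1 ≤ Fintype.card (Quotient (cyc f)) :=
    Fintype.card_pos_iff.mpr ⟨Quotient.mk'' b⟩
  omega

/-! ### orbit surgery under multiplication by a swap -/

lemma sc0 {π : Equiv.Perm (Fin n)} {a b : Fin n} (hab : π.SameCycle a b) :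
    ∀ x y, (Equiv.swap a b * π).SameCycle x y → π.SameCycle x y := by
  apply pointwise_le
  intro x
  rw [Equiv.Perm.mul_apply]
  rcases eq_or_ne (π x) a with h | h
  · rw [h, Equiv.swap_apply_left]
    exact ((sc_of_pow 1 (by simp) : π.SameCycle x (π x)).trans (h ▸ hab))
  rcases eq_or_ne (π x) b with h' | h'
  · rw [h', Equiv.swap_apply_right]
    exact ((sc_of_pow 1 (by simp) : π.SameCycle x (π x)).trans (h' ▸ hab.symm))
  · rw [Equiv.swap_apply_of_ne_of_ne h h']
    exact sc_of_pow 1 (by simp)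

lemma sc1 {π : Equiv.Perm (Fin n)} {a b : Fin n} (hab : π.SameCycle a b) (hne : a ≠ b) :
    ¬ (Equiv.swap a b * π).SameCycle a b := by
  classical
  set ρ := Equiv.swap a b * π with hρ
  have hex : ∃ k, 0 < k ∧ (π ^ k) b = a := by
    obtain ⟨i, hi, h⟩ := (hab.symm).exists_pow_eq'
    rcases Nat.eq_zero_or_pos i with rfl | hpos
    · simp only [pow_zero, Equiv.Perm.one_apply] at h
      exact absurd h.symm hne
    · exact ⟨i, hpos, h⟩
  set k := Nat.find hex with hk
  obtain ⟨hk1, hka⟩ : 0 < k ∧ (π ^ k) b = a := Nat.find_spec hex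
  have hmin : ∀ j, j < k → ¬(0 < j ∧ (π ^ j) b = a) := fun j hj => Nat.find_min hex hj
  have hnotb : ∀ j, 0 < j → j < k → (π ^ j) b ≠ b := by
    intro j hj hjk hbb
    have h2 : (π ^ (k - j)) ((π ^ j) b) = a := by
      rw [← Equiv.Perm.mul_apply, ← pow_add, Nat.sub_add_cancel (le_of_lt hjk)]
      exact hka
    rw [hbb] at h2
    exact hmin (k - j) (by omega) ⟨by omega, h2⟩
  have hnota : ∀ j, j < k → (π ^ j) b ≠ a := by
    intro j hj
    rcases Nat.eq_zero_or_pos j with rfl | hp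
    · simpa using fun h => hne h.symm
    · exact fun h => hmin j hj ⟨hp, h⟩
  have key : ∀ j, j < k → (ρ ^ j) b = (π ^ j) b := by
    intro j hj
    induction j with
    | zero => rfl
    | succ j ih =>
      rw [pow_succ_apply, ih (by omega), hρ, Equiv.Perm.mul_apply, ← pow_succ_apply]
      exact Equiv.swap_apply_of_ne_of_ne (hnota _ hj) (hnotb _ (by omega) hj)
  have hret : (ρ ^ k) b = b := by
    have hk1' : k - 1 < k := by omega
    have hkk : k - 1 + 1 = k := by omega
    have h3 : (ρ ^ k) b = ρ ((ρ ^ (k - 1)) b) := by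
      conv_lhs => rw [← hkk]
      rw [pow_succ_apply]
    rw [h3, key _ hk1', hρ, Equiv.Perm.mul_apply, ← pow_succ_apply]
    have h4 : (π ^ (k - 1 + 1)) b = a := by
      rw [Nat.sub_add_cancel hk1]; exact hka
    rw [h4, Equiv.swap_apply_left]
  have hper : ∀ i, (ρ ^ i) b ≠ a := by
    intro i
    induction i using Nat.strong_induction_on with
    | _ i ih =>
      rcases lt_or_ge i k with h | h
      · rw [key i h]; exact hnota i h
      · have h5 : (ρ ^ i) b = (ρ ^ (i - k)) b := by
          have h6 : (ρ ^ i) = (ρ ^ (i - k)) * (ρ ^ k) := by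
            rw [← pow_add]; congr 1; omega
          rw [h6, Equiv.Perm.mul_apply, hret]
        rw [h5]; exact ih (i - k) (by omega)
  intro hcon
  obtain ⟨i, _, hi⟩ := hcon.symm.exists_pow_eq'
  exact hper i hi

lemma sc2 {π : Equiv.Perm (Fin n)} {a b : Fin n} (hnab : ¬ π.SameCycle a b) :
    (Equiv.swap a b * π).SameCycle a b := by
  classical
  have hne : a ≠ b := fun h => hnab (h ▸ SameCycle.refl π a)
  set ρ := Equiv.swap a b * π with hρ
  rcases eq_or_ne (π a) a with hfix | hfix
  · refine sc_of_pow 1 ?_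
    simp only [pow_one, hρ, Equiv.Perm.mul_apply, hfix, Equiv.swap_apply_left]
  have hex : ∃ k, 0 < k ∧ (π ^ k) a = a := by
    refine ⟨orderOf π, ?_, by rw [pow_orderOf_eq_one]; rfl⟩
    exact orderOf_pos π
  set k := Nat.find hex with hk
  obtain ⟨hk1, hka⟩ : 0 < k ∧ (π ^ k) a = a := Nat.find_spec hex
  have hmin : ∀ j, j < k → ¬(0 < j ∧ (π ^ j) a = a) := fun j hj => Nat.find_min hex hj
  have hnotb : ∀ j : ℕ, (π ^ j) a ≠ b := by
    intro j h
    exact hnab (sc_of_pow j h)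
  have hnota : ∀ j, 0 < j → j < k → (π ^ j) a ≠ a := by
    intro j h0 hj hcon
    exact hmin j hj ⟨h0, hcon⟩
  have key : ∀ j, j < k → (ρ ^ j) a = (π ^ j) a := by
    intro j hj
    induction j with
    | zero => rfl
    | succ j ih =>
      rw [pow_succ_apply, ih (by omega), hρ, Equiv.Perm.mul_apply, ← pow_succ_apply]
      exact Equiv.swap_apply_of_ne_of_ne (hnota _ (by omega) hj) (hnotb _)
  have hfin : (ρ ^ k) a = b := by
    have hk1' : k - 1 < k := by
      have : k ≠ 1 := by
        intro h1
        rw [h1, pow_one] at hka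
        exact hfix hka
      omega
    have hkk : k - 1 + 1 = k := by omega
    have h3 : (ρ ^ k) a = ρ ((ρ ^ (k - 1)) a) := by
      conv_lhs => rw [← hkk]
      rw [pow_succ_apply]
    rw [h3, key _ hk1', hρ, Equiv.Perm.mul_apply, ← pow_succ_apply]
    have h4 : (π ^ (k - 1 + 1)) a = a := by rw [Nat.sub_add_cancel hk1]; exact hka
    rw [h4, Equiv.swap_apply_left]
  exact sc_of_pow k hfin

lemma scj {π : Equiv.Perm (Fin n)} {a b : Fin n} (hnab : ¬ π.SameCycle a b) :
    ∀ x y, (Equiv.swap a b * π).SameCycle x y →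
      π.SameCycle x y ∨ (π.SameCycle x a ∧ π.SameCycle b y) ∨
        (π.SameCycle x b ∧ π.SameCycle a y) := by
  classical
  set ρ := Equiv.swap a b * π with hρ
  have step : ∀ w : Fin n, π.SameCycle w (π w) := fun w => sc_of_pow 1 (by simp)
  have aux : ∀ (x : Fin n) (i : ℕ),
      π.SameCycle x ((ρ ^ i) x) ∨ (π.SameCycle x a ∧ π.SameCycle b ((ρ ^ i) x)) ∨
        (π.SameCycle x b ∧ π.SameCycle a ((ρ ^ i) x)) := by
    intro x i
    induction i with
    | zero => exact Or.inl (SameCycle.refl π x)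
    | succ i ih =>
      set w := (ρ ^ i) x with hw
      rw [pow_succ_apply, ← hw]
      have hρw : ρ w = Equiv.swap a b (π w) := rfl
      rcases eq_or_ne (π w) a with hwa | hwa
      · rw [hρw, hwa, Equiv.swap_apply_left]
        rcases ih with h | h | h
        · exact Or.inr (Or.inl ⟨h.trans ((step w).trans (hwa ▸ SameCycle.refl π a)),
            SameCycle.refl π b⟩)
        · exact absurd ((h.2.trans ((step w).trans (hwa ▸ SameCycle.refl π a)))).symm hnab
        · exact Or.inl h.1
      rcases eq_or_ne (π w) b with hwb | hwb
      · rw [hρw, hwb, Equiv.swap_apply_right]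
        rcases ih with h | h | h
        · exact Or.inr (Or.inr ⟨h.trans ((step w).trans (hwb ▸ SameCycle.refl π b)),
            SameCycle.refl π a⟩)
        · exact Or.inl h.1
        · exact absurd ((h.2.trans ((step w).trans (hwb ▸ SameCycle.refl π b)))) hnab
      · rw [hρw, Equiv.swap_apply_of_ne_of_ne hwa hwb]
        rcases ih with h | h | h
        · exact Or.inl (h.trans (step w))
        · exact Or.inr (Or.inl ⟨h.1, h.2.trans (step w)⟩)
        · exact Or.inr (Or.inr ⟨h.1, h.2.trans (step w)⟩)
  intro x y hxy
  obtain ⟨i, _, rfl⟩ := hxy.exists_pow_eq'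
  exact aux x i

/-! ### swapLength basics -/

lemma sl_set_nonempty (f : Equiv.Perm (Fin n)) :
    {k | ∃ l : List (Equiv.Perm (Fin n)),
      l.length = k ∧ (∀ t ∈ l, t.IsSwap) ∧ l.prod = f}.Nonempty := by
  obtain ⟨l, hl1, hl2⟩ := (Equiv.Perm.truncSwapFactors f).out
  exact ⟨l.length, l, rfl, hl2, hl1⟩

lemma sl_exists (f : Equiv.Perm (Fin n)) :
    ∃ l : List (Equiv.Perm (Fin n)),
      l.length = swapLength n f ∧ (∀ t ∈ l, t.IsSwap) ∧ l.prod = f :=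
  Nat.sInf_mem (sl_set_nonempty f)

lemma sl_le {f : Equiv.Perm (Fin n)} {l : List (Equiv.Perm (Fin n))}
    (hl : ∀ t ∈ l, t.IsSwap) (hp : l.prod = f) : swapLength n f ≤ l.length :=
  Nat.sInf_le ⟨l, rfl, hl, hp⟩

lemma sl_one : swapLength n 1 = 0 :=
  Nat.le_zero.mp (sl_le (l := []) (by simp) (by simp))

lemma sl_eq_zero {f : Equiv.Perm (Fin n)} (h : swapLength n f = 0) : f = 1 := by
  obtain ⟨l, hlen, _, hp⟩ := sl_exists f
  rw [h] at hlen
  rw [List.length_eq_zero_iff] at hlen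
  rw [hlen] at hp
  simpa using hp.symm

lemma sl_mul_le (f g : Equiv.Perm (Fin n)) :
    swapLength n (f * g) ≤ swapLength n f + swapLength n g := by
  obtain ⟨l1, h11, h12, h13⟩ := sl_exists f
  obtain ⟨l2, h21, h22, h23⟩ := sl_exists g
  have := sl_le (f := f * g) (l := l1 ++ l2) ?_ ?_
  · simpa [h11, h21] using this
  · intro t ht; rcases List.mem_append.mp ht with h | h
    · exact h12 t h
    · exact h22 t h
  · rw [List.prod_append, h13, h23]

lemma sl_swap {a b : Fin n} (h : a ≠ b) : swapLength n (Equiv.swap a b) = 1 := by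
  have h1 : swapLength n (Equiv.swap a b) ≤ 1 :=
    sl_le (l := [Equiv.swap a b]) (by simpa using ⟨a, b, h, rfl⟩) (by simp)
  rcases Nat.eq_zero_or_pos (swapLength n (Equiv.swap a b)) with h0 | h0
  · exfalso
    have := sl_eq_zero h0
    have := congrArg (fun (e : Equiv.Perm (Fin n)) => e a) this
    simp [Equiv.swap_apply_left] at this
    exact h this.symm
  · omega

/-! ### counting orbits -/

local notation "cc" => fun f => Nat.card (Quotient (cyc (n := n) f))

lemma cc_le (f : Equiv.Perm (Fin n)) : Nat.card (Quotient (cyc f)) ≤ n := by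
  have h := Nat.card_le_card_of_surjective
    (Quotient.mk'' : Fin n → Quotient (cyc f)) (by
      intro q; induction q using Quotient.inductionOn' with
      | h a => exact ⟨a, rfl⟩)
  simpa using h

lemma cc_one : Nat.card (Quotient (cyc (1 : Equiv.Perm (Fin n)))) = n := by
  have hbij : Function.Bijective (Quotient.mk'' : Fin n → Quotient (cyc (1 : Equiv.Perm (Fin n)))) := by
    constructor
    · intro x y hxy
      have h : (1 : Equiv.Perm (Fin n)).SameCycle x y := Quotient.exact' hxy
      simpa using h
    · intro q; induction q using Quotient.inductionOn' with
      | h a => exact ⟨a, rfl⟩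
  calc Nat.card (Quotient (cyc (1 : Equiv.Perm (Fin n))))
      = Nat.card (Fin n) := (Nat.card_congr (Equiv.ofBijective _ hbij)).symm
    _ = n := by simp

lemma cc_eq_n_imp_one {f : Equiv.Perm (Fin n)} (h : n ≤ Nat.card (Quotient (cyc f))) :
    f = 1 := by
  classical
  letI : Fintype (Quotient (cyc f)) := Fintype.ofFinite _
  have hsurj : Function.Surjective (Quotient.mk'' : Fin n → Quotient (cyc f)) := by
    intro q; induction q using Quotient.inductionOn' with
    | h a => exact ⟨a, rfl⟩
  have hcard : Fintype.card (Fin n) = Fintype.card (Quotient (cyc f)) := by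
    have h1 : Fintype.card (Quotient (cyc f)) = Nat.card (Quotient (cyc f)) :=
      (Nat.card_eq_fintype_card).symm
    have h2 := cc_le f
    simp only [Fintype.card_fin]
    omega
  have hinj : Function.Injective (Quotient.mk'' : Fin n → Quotient (cyc f)) :=
    ((Fintype.bijective_iff_surjective_and_card _).mpr ⟨hsurj, hcard⟩).1
  ext x
  have hx : (Quotient.mk'' x : Quotient (cyc f)) = Quotient.mk'' (f x) :=
    Quotient.sound' (sc_of_pow 1 (by simp))
  have := hinj hx
  simp [← this]

/-- multiplying by a swap on the left decreases the orbit count by at most one -/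
lemma cc_swap_mul_ge {f : Equiv.Perm (Fin n)} {a b : Fin n} (hne : a ≠ b) :
    Nat.card (Quotient (cyc f)) ≤ Nat.card (Quotient (cyc (Equiv.swap a b * f))) + 1 := by
  by_cases hab : f.SameCycle a b
  · have := count_le_of_le (sc0 hab)
    omega
  · exact count_le_succ_of_join (fun x y h => pointwise_le (fun x => by
      have hx : (Equiv.swap a b * f).SameCycle x ((Equiv.swap a b * f) x) :=
        sc_of_pow 1 (by simp)
      rcases eq_or_ne (f x) a with h1 | h1
      · rw [h1]
        have h3 : (Equiv.swap a b * f) x = b := by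
          rw [Equiv.Perm.mul_apply, h1, Equiv.swap_apply_left]
        rw [h3] at hx
        exact hx.trans (sc2 hab).symm
      rcases eq_or_ne (f x) b with h2 | h2
      · rw [h2]
        have h3 : (Equiv.swap a b * f) x = a := by
          rw [Equiv.Perm.mul_apply, h2, Equiv.swap_apply_right]
        rw [h3] at hx
        exact hx.trans (sc2 hab)
      · have h3 : (Equiv.swap a b * f) x = f x := by
          rw [Equiv.Perm.mul_apply, Equiv.swap_apply_of_ne_of_ne h1 h2]
        rwa [h3] at hx) x y h) (scj hab)

/-- `swapLength + orbitCount = n` -/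
lemma sl_add_cc (f : Equiv.Perm (Fin n)) :
    swapLength n f + Nat.card (Quotient (cyc f)) = n := by
  classical
  -- upper bound : swapLength f ≤ n - cc f
  have upper : ∀ m : ℕ, ∀ f : Equiv.Perm (Fin n),
      n ≤ Nat.card (Quotient (cyc f)) + m → swapLength n f ≤ m := by
    intro m
    induction m with
    | zero =>
      intro f hf
      simp only [Nat.add_zero] at hf
      rw [cc_eq_n_imp_one hf, sl_one]
    | succ m ih =>
      intro f hf
      by_cases h1 : f = 1
      · rw [h1, sl_one]; omega
      · have hx : ∃ x, f x ≠ x := by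
          by_contra hcon
          push_neg at hcon
          exact h1 (Equiv.ext hcon)
        obtain ⟨x, hx⟩ := hx
        set ρ := Equiv.swap x (f x) * f with hρ
        have hsplit : Nat.card (Quotient (cyc f)) < Nat.card (Quotient (cyc ρ)) := by
          apply count_lt_of_split (a := x) (b := f x)
            (sc0 (sc_of_pow 1 (by simp)))
            (sc_of_pow 1 (by simp))
          intro hcon
          have hfix : ρ x = x := by
            rw [hρ, Equiv.Perm.mul_apply, Equiv.swap_apply_right]
          have := fixed_sc hfix hcon
          exact hx this
        have hle : swapLength n ρ ≤ m := ih ρ (by omega)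
        obtain ⟨l, hlen, hsw, hprod⟩ := sl_exists ρ
        have hproc : (Equiv.swap x (f x) :: l).prod = f := by
          rw [List.prod_cons, hprod, hρ, ← mul_assoc, Equiv.swap_mul_self, one_mul]
        have := sl_le (f := f) (l := Equiv.swap x (f x) :: l) ?_ hproc
        · simp only [List.length_cons] at this
          omega
        · intro t ht
          rcases List.mem_cons.mp ht with h | h
          · exact h ▸ ⟨x, f x, Ne.symm hx, rfl⟩
          · exact hsw t h
  -- lower bound : n ≤ swapLength f + cc f
  have lower : ∀ l : List (Equiv.Perm (Fin n)), (∀ t ∈ l, t.IsSwap) →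
      n ≤ l.length + Nat.card (Quotient (cyc l.prod)) := by
    intro l
    induction l with
    | nil =>
      intro _
      simp only [List.prod_nil, List.length_nil, Nat.zero_add]
      rw [cc_one]
    | cons t l ih =>
      intro hsw
      have h1 := ih (fun u hu => hsw u (List.mem_cons_of_mem t hu))
      obtain ⟨a, b, hab, rfl⟩ := hsw t List.mem_cons_self
      have h2 := cc_swap_mul_ge (f := l.prod) hab
      rw [List.prod_cons]
      simp only [List.length_cons]
      omega
  obtain ⟨l, hlen, hsw, hprod⟩ := sl_exists f
  have h1 := lower l hsw
  rw [hprod, hlen] at h1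
  have h2 : swapLength n f ≤ n - Nat.card (Quotient (cyc f)) := by
    apply upper
    have := cc_le f
    omega
  have := cc_le f
  omega

/-! ### orientation and noncrossing predicates -/

/-- each point steps to the cyclically nearest point of its orbit -/
def Orn (π : Equiv.Perm (Fin n)) : Prop :=
  ∀ a y, π.SameCycle a y → y = a ∨ dd a (π a) ≤ dd a y

/-- distinct orbits do not cross (successor-chord version) -/
def NX (π : Equiv.Perm (Fin n)) : Prop :=
  ∀ a u v, ¬π.SameCycle a u → π.SameCycle u v →
    dd a u < dd a (π a) → dd a v < dd a (π a)

lemma not_fixed {π : Equiv.Perm (Fin n)} {a c : Fin n}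
    (h : π.SameCycle a c) (hne : c ≠ a) : π a ≠ a :=
  fun hfix => hne (fixed_sc hfix h)

lemma sc_apply (π : Equiv.Perm (Fin n)) (x : Fin n) : π.SameCycle x (π x) :=
  sc_of_pow 1 (by simp)

lemma pred_lt {π : Equiv.Perm (Fin n)} (hOrn : Orn π) {a u : Fin n}
    (hau : π.SameCycle a u) (hune : u ≠ a) : dd a (π⁻¹ u) < dd a u := by
  obtain ⟨p, hpu, hp⟩ : ∃ p, π p = u ∧ π⁻¹ u = p := ⟨π⁻¹ u, Equiv.apply_symm_apply π u, rfl⟩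
  rw [hp]
  rcases eq_or_ne p a with rfl | hpa
  · rw [dd_self]
    exact dd_pos (Ne.symm hune)
  · have hap : π.SameCycle a p := hau.trans (by rw [← hp]; exact (SameCycle.refl π u).symm_apply_right)
    have hpune : p ≠ u := by
      intro h
      rw [h] at hpu
      exact hune (fixed_sc hpu hau.symm).symm
    have h1 : dd p (π p) ≤ dd p a := by
      rcases hOrn p a hap.symm with h | h
      · exact absurd h.symm hpa
      · exact h
    rw [hpu] at h1
    have h2 := dd_add3 a p a
    rw [dd_self] at h2
    have h3 := dd_add3 a p u
    have h4 := dd_pos (Ne.symm hpa)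
    have h5 := dd_pos hpune
    have h6 := dd_pos (Ne.symm hune)
    have h7 := dd_lt a p
    have h8 := dd_lt a u
    have h9 := dd_lt p u
    rcases h2 with h2 | h2 <;> rcases h3 with h3 | h3 <;> omega

lemma nx2_aux {π : Equiv.Perm (Fin n)} (hOrn : Orn π) (hNX : NX π) :
    ∀ (d : ℕ) (a c u v : Fin n), dd a c ≤ d → π.SameCycle a c → ¬π.SameCycle a u →
      π.SameCycle u v → dd a u < dd a c → dd a v < dd a c := by
  intro d
  induction d with
  | zero => intro a c u v hd _ _ _ hu; omega
  | succ d ih =>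
    intro a c u v hd hac hnu huv hu
    have hca : c ≠ a := by
      intro h
      rw [h, dd_self] at hu
      omega
    set m := dd a (π a) with hm
    have hmc : m ≤ dd a c := by
      rcases hOrn a c hac with h | h
      · exact absurd h hca
      · exact h
    rcases lt_or_ge (dd a u) m with hlt | hge
    · exact lt_of_lt_of_le (hNX a u v hnu huv hlt) hmc
    · have hmu : m < dd a u := by
        rcases lt_or_eq_of_le hge with h | h
        · exact h
        · exfalso
          have : u = π a := dd_inj h.symm
          exact hnu (this ▸ (sc_apply π a).symm.symm)
      have hm0 : 0 < m := by
        have := not_fixed hac hca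
        rw [hm]
        exact dd_pos (Ne.symm this)
      have haa' : π.SameCycle a (π a) := sc_apply π a
      have ha'c : π.SameCycle (π a) c := haa'.symm.trans hac
      have hnu' : ¬π.SameCycle (π a) u := fun h => hnu (haa'.trans h)
      have h3u := dd_add3 a (π a) u
      have h3c := dd_add3 a (π a) c
      have h3v := dd_add3 a (π a) v
      rw [← hm] at h3u h3c h3v
      have l1 := dd_lt a u
      have l2 := dd_lt a c
      have l3 := dd_lt a v
      have l4 := dd_lt (π a) u
      have l5 := dd_lt (π a) c
      have l6 := dd_lt (π a) v
      have e1 : dd (π a) u = dd a u - m := by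
        rcases h3u with h | h <;> omega
      have e2 : dd (π a) c = dd a c - m := by
        rcases h3c with h | h <;> omega
      have key := ih (π a) c u v (by omega) ha'c hnu' huv (by omega)
      rcases h3v with h | h <;> omega

lemma nx2 {π : Equiv.Perm (Fin n)} (hOrn : Orn π) (hNX : NX π) {a c u v : Fin n}
    (hac : π.SameCycle a c) (hnu : ¬π.SameCycle a u) (huv : π.SameCycle u v)
    (hu : dd a u < dd a c) : dd a v < dd a c :=
  nx2_aux hOrn hNX (dd a c) a c u v le_rfl hac hnu huv hu

/-- everything in the near cell is connected to `a` after the cut -/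
lemma cell_conn {π : Equiv.Perm (Fin n)} (hOrn : Orn π) {a b : Fin n}
    (hab : π.SameCycle a b) (hne : a ≠ b) :
    ∀ u, π.SameCycle a u → dd a u < dd a b → (Equiv.swap a b * π).SameCycle a u := by
  have main : ∀ (d : ℕ) (u : Fin n), dd a u ≤ d → π.SameCycle a u → dd a u < dd a b →
      (Equiv.swap a b * π).SameCycle a u := by
    intro d
    induction d with
    | zero =>
      intro u hd _ _
      have : a = u := dd_eq_zero_iff.mp (by omega)
      exact this ▸ SameCycle.refl _ a
    | succ d ih =>
      intro u hd hau hlt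
      rcases eq_or_ne u a with rfl | hune
      · exact SameCycle.refl _ u
      · obtain ⟨p, hpu, hp⟩ : ∃ p, π p = u ∧ π⁻¹ u = p :=
          ⟨π⁻¹ u, Equiv.apply_symm_apply π u, rfl⟩
        have hlt2 : dd a p < dd a u := by
          have := pred_lt hOrn hau hune
          rwa [hp] at this
        have hap : π.SameCycle a p :=
          hau.trans (by rw [← hp]; exact (SameCycle.refl π u).symm_apply_right)
        have hub : u ≠ b := by
          intro h
          rw [h] at hlt
          omega
        have ih2 := ih p (by omega) hap (by omega)
        have hstep : (Equiv.swap a b * π) p = u := by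
          rw [Equiv.Perm.mul_apply, hpu, Equiv.swap_apply_of_ne_of_ne hune hub]
        exact ih2.trans (sc_of_pow 1 (by simpa using hstep))
  intro u h1 h2
  exact main (dd a u) u le_rfl h1 h2

/-- orbits not containing `a` and `b` are untouched by the cut -/
lemma out_conn {π : Equiv.Perm (Fin n)} {a b w v : Fin n}
    (hwa : ¬π.SameCycle w a) (hwb : ¬π.SameCycle w b)
    (hwv : π.SameCycle w v) : (Equiv.swap a b * π).SameCycle w v := by
  have key : ∀ i : ℕ, ((Equiv.swap a b * π) ^ i) w = (π ^ i) w := by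
    intro i
    induction i with
    | zero => rfl
    | succ i ih =>
      rw [pow_succ_apply, ih, pow_succ_apply, Equiv.Perm.mul_apply]
      have h1 : π ((π ^ i) w) ≠ a := by
        intro h
        exact hwa (sc_of_pow (i + 1) (by rw [pow_succ_apply]; exact h))
      have h2 : π ((π ^ i) w) ≠ b := by
        intro h
        exact hwb (sc_of_pow (i + 1) (by rw [pow_succ_apply]; exact h))
      rw [Equiv.swap_apply_of_ne_of_ne h1 h2]
  obtain ⟨i, _, hi⟩ := hwv.exists_pow_eq'
  exact sc_of_pow i (by rw [key]; exact hi)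

/-- the far cell is closed under one application of the cut permutation -/
lemma cell_closed {π : Equiv.Perm (Fin n)} (hOrn : Orn π) {A B : Fin n}
    (hAB : π.SameCycle A B) (hne : A ≠ B) :
    ∀ u, π.SameCycle A u → dd B u < dd B A →
      π.SameCycle A ((Equiv.swap A B * π) u) ∧ dd B ((Equiv.swap A B * π) u) < dd B A := by
  intro u hu hcell
  have hDD : dd A B + dd B A = n := by
    have h1 := dd_add3 A B A
    rw [dd_self] at h1
    have := dd_pos hne
    have := dd_pos (Ne.symm hne)
    omega
  rcases eq_or_ne (π u) A with hA | hA
  · have hρ : (Equiv.swap A B * π) u = B := by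
      rw [Equiv.Perm.mul_apply, hA, Equiv.swap_apply_left]
    rw [hρ]
    exact ⟨hAB, by rw [dd_self]; exact dd_pos (Ne.symm hne)⟩
  rcases eq_or_ne (π u) B with hB | hB
  · exfalso
    have huB : u ≠ B := by
      intro h
      rw [h] at hB
      exact (not_fixed hAB.symm hne) hB
    have huA : u ≠ A := by
      intro h
      rw [h] at hcell
      omega
    have h1 : dd u (π u) ≤ dd u A := by
      rcases hOrn u A hu.symm with h | h
      · exact absurd h huA.symm
      · exact h
    rw [hB] at h1
    have h2 := dd_add3 B u B
    rw [dd_self] at h2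
    have h3 := dd_add3 B u A
    have p1 := dd_pos huB
    have p2 := dd_pos (Ne.symm huB)
    have p3 := dd_pos hne
    have l1 := dd_lt u B
    have l2 := dd_lt u A
    have l3 := dd_lt B u
    rcases h2 with h2 | h2 <;> rcases h3 with h3 | h3 <;> omega
  · have heq : (Equiv.swap A B * π) u = π u := by
      rw [Equiv.Perm.mul_apply, Equiv.swap_apply_of_ne_of_ne hA hB]
    rw [heq]
    refine ⟨hu.trans (sc_apply π u), ?_⟩
    by_contra hcon
    push_neg at hcon
    have hc1 : dd A (π u) < dd A B := by
      rcases dd_dichotomy hne (π u) with h | h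
      · exact h
      · omega
    have huA : u ≠ A := by
      intro h
      rw [h] at hcell
      omega
    have h1 : dd u (π u) ≤ dd u A := by
      rcases hOrn u A hu.symm with h | h
      · exact absurd h huA.symm
      · exact h
    have h3 := dd_add3 B u A
    have h4 := dd_add3 u A (π u)
    have := dd_pos (Ne.symm hA)
    have := dd_lt B u
    have := dd_lt u A
    have := dd_lt u (π u)
    have := dd_lt A (π u)
    omega

/-- the far cell is closed under the whole orbit of the cut permutation -/
lemma cell_orbit {π : Equiv.Perm (Fin n)} (hOrn : Orn π) {A B : Fin n}
    (hAB : π.SameCycle A B) (hne : A ≠ B) :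
    ∀ u v, π.SameCycle A u → dd B u < dd B A → (Equiv.swap A B * π).SameCycle u v →
      π.SameCycle A v ∧ dd B v < dd B A := by
  intro u v hu hcell hv
  have aux : ∀ i : ℕ, π.SameCycle A (((Equiv.swap A B * π) ^ i) u) ∧
      dd B (((Equiv.swap A B * π) ^ i) u) < dd B A := by
    intro i
    induction i with
    | zero => exact ⟨hu, hcell⟩
    | succ i ih =>
      rw [pow_succ_apply]
      exact cell_closed hOrn hAB hne _ ih.1 ih.2
  obtain ⟨i, _, rfl⟩ := hv.exists_pow_eq'
  exact aux i

lemma pred_in_cell2 {π : Equiv.Perm (Fin n)} (hOrn : Orn π) {A B x : Fin n}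
    (hAB : π.SameCycle A B) (hne : A ≠ B) (hx : π x = A) : dd B x < dd B A := by
  rcases eq_or_ne x B with rfl | hxB
  · rw [dd_self]; exact dd_pos (Ne.symm hne)
  · have hxA' : x ≠ A := by
      intro h
      rw [h] at hx
      exact (Ne.symm hne) (fixed_sc hx hAB)
    have hxC : π.SameCycle A x := by
      have h0 : π.SameCycle x A := by rw [← hx]; exact sc_apply π x
      exact h0.symm
    rcases dd_dichotomy hne x with h | h
    · exfalso
      have h1 : dd x (π x) ≤ dd x B := by
        rcases hOrn x B (hxC.symm.trans hAB) with h' | h'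
        · exact absurd h' (Ne.symm hxB)
        · exact h'
      rw [hx] at h1
      have h2 := dd_add3 A x B
      have h3 := dd_add3 A x A
      rw [dd_self] at h3
      have p1 := dd_pos (Ne.symm hxA')
      have p2 := dd_pos hne
      have l1 := dd_lt x B
      have l2 := dd_lt x A
      have l3 := dd_lt A x
      have l4 := dd_lt A B
      rcases h2 with h2 | h2 <;> rcases h3 with h3 | h3 <;> omega
    · exact h

lemma orn_pred {π : Equiv.Perm (Fin n)} (hOrn : Orn π) {A B x : Fin n}
    (hAB : π.SameCycle A B) (hne : A ≠ B) (hx : π x = A) :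
    ∀ v, (Equiv.swap A B * π).SameCycle x v →
      v = x ∨ dd x ((Equiv.swap A B * π) x) ≤ dd x v := by
  intro v hv
  have hρx : (Equiv.swap A B * π) x = B := by
    rw [Equiv.Perm.mul_apply, hx, Equiv.swap_apply_left]
  rcases eq_or_ne v x with rfl | hvx
  · exact Or.inl rfl
  right
  rw [hρx]
  have hxC : π.SameCycle A x := by
    have h0 : π.SameCycle x A := by rw [← hx]; exact sc_apply π x
    exact h0.symm
  have hxcell : dd B x < dd B A := pred_in_cell2 hOrn hAB hne hx
  obtain ⟨hvC, hvcell⟩ := cell_orbit hOrn hAB hne x v hxC hxcell hv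
  rcases eq_or_ne x B with rfl | hxB
  · rw [dd_self]; omega
  have hmax : dd B v ≤ dd B x := by
    by_contra hcon
    push_neg at hcon
    have h1 : dd x (π x) ≤ dd x v := by
      rcases hOrn x v (hxC.symm.trans hvC) with h | h
      · exact absurd h hvx
      · exact h
    rw [hx] at h1
    have h3 := dd_add3 B x v
    have h4 := dd_add3 B x A
    have l1 := dd_lt B v
    have l2 := dd_lt x v
    have l3 := dd_lt x A
    have l4 := dd_lt B x
    rcases h3 with h3 | h3 <;> rcases h4 with h4 | h4 <;> omega
  have hvBx : dd B v < dd B x := lt_of_le_of_ne hmax (fun h => hvx (dd_inj h))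
  have h5 := dd_add3 B x B
  rw [dd_self] at h5
  have h6 := dd_add3 B x v
  have p1 := dd_pos hxB
  have p2 := dd_pos (Ne.symm hxB)
  have l1 := dd_lt x v
  have l2 := dd_lt x B
  rcases h5 with h5 | h5 <;> rcases h6 with h6 | h6 <;> omega

lemma nx_pred {π : Equiv.Perm (Fin n)} (hOrn : Orn π) (hNX : NX π) {A B x : Fin n}
    (hAB : π.SameCycle A B) (hne : A ≠ B) (hx : π x = A) :
    ∀ u v, ¬(Equiv.swap A B * π).SameCycle x u → (Equiv.swap A B * π).SameCycle u v →
      dd x u < dd x ((Equiv.swap A B * π) x) → dd x v < dd x ((Equiv.swap A B * π) x) := by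
  intro u v hnu huv hlt
  have hρx : (Equiv.swap A B * π) x = B := by
    rw [Equiv.Perm.mul_apply, hx, Equiv.swap_apply_left]
  rw [hρx] at hlt ⊢
  rcases eq_or_ne x B with rfl | hxB
  · rw [dd_self] at hlt; omega
  have hxC : π.SameCycle A x := by
    have h0 : π.SameCycle x A := by rw [← hx]; exact sc_apply π x
    exact h0.symm
  have hxcell : dd B x < dd B A := pred_in_cell2 hOrn hAB hne hx
  by_cases huC : π.SameCycle A u
  · have hu1 : dd A u < dd A B := by
      rcases dd_dichotomy hne u with h | h
      · exact h
      · exfalso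
        have h1 : (Equiv.swap A B * π).SameCycle B u := by
          have h2 := cell_conn (a := B) (b := A) hOrn hAB.symm (Ne.symm hne) u
            (hAB.symm.trans huC) h
          rwa [Equiv.swap_comm] at h2
        have h2 : (Equiv.swap A B * π).SameCycle x B := by
          have h0 := sc_apply (Equiv.swap A B * π) x
          rwa [hρx] at h0
        exact hnu (h2.trans h1.symm.symm)
    have hv1 : dd A v < dd A B := by
      have h2 := cell_orbit (A := B) (B := A) hOrn hAB.symm (Ne.symm hne) u v
        (hAB.symm.trans huC) hu1 (by rwa [Equiv.swap_comm])
      exact h2.2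
    have hDD : dd A B + dd B A = n := by
      have h6 := dd_add3 A B A
      rw [dd_self] at h6
      have := dd_pos hne
      have := dd_pos (Ne.symm hne)
      rcases h6 with h | h <;> omega
    have h3 := dd_add3 B x A
    have h4 := dd_add3 x A v
    have h5 := dd_add3 B x B
    rw [dd_self] at h5
    have p1 := dd_pos (Ne.symm hxB)
    have p3 := dd_pos hxB
    have l1 := dd_lt x A
    have l2 := dd_lt x v
    have l3 := dd_lt A v
    have l4 := dd_lt x B
    rcases h3 with h3 | h3 <;> rcases h4 with h4 | h4 <;>
      rcases h5 with h5 | h5 <;> omega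
  · have hxB' : π.SameCycle x B := hxC.symm.trans hAB
    have hnu' : ¬π.SameCycle x u := fun h => huC (hxC.trans h)
    have huv' : π.SameCycle u v := sc0 hAB u v huv
    exact nx2 hOrn hNX hxB' hnu' huv' hlt

lemma goodstep {π : Equiv.Perm (Fin n)} (hOrn : Orn π) (hNX : NX π) {A B : Fin n}
    (hAB : π.SameCycle A B) (hne : A ≠ B) :
    Orn (Equiv.swap A B * π) ∧ NX (Equiv.swap A B * π) := by
  have hcomm : Equiv.swap B A * π = Equiv.swap A B * π := by rw [Equiv.swap_comm]
  constructor
  · intro a y hy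
    rcases eq_or_ne (π a) A with hA' | hA'
    · exact orn_pred hOrn hAB hne hA' y hy
    rcases eq_or_ne (π a) B with hB' | hB'
    · have h2 := orn_pred (A := B) (B := A) hOrn hAB.symm (Ne.symm hne) hB' y
        (by rwa [hcomm])
      rwa [hcomm] at h2
    · have hρa : (Equiv.swap A B * π) a = π a := by
        rw [Equiv.Perm.mul_apply, Equiv.swap_apply_of_ne_of_ne hA' hB']
      have hy' : π.SameCycle a y := sc0 hAB a y hy
      rw [hρa]
      exact hOrn a y hy'
  · intro a u v hnu huv hlt
    rcases eq_or_ne (π a) A with hA' | hA'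
    · exact nx_pred hOrn hNX hAB hne hA' u v hnu huv hlt
    rcases eq_or_ne (π a) B with hB' | hB'
    · have h2 := nx_pred (A := B) (B := A) hOrn hNX hAB.symm (Ne.symm hne) hB' u v
        (by rwa [hcomm]) (by rwa [hcomm]) (by rwa [hcomm])
      rwa [hcomm] at h2
    · have hρa : (Equiv.swap A B * π) a = π a := by
        rw [Equiv.Perm.mul_apply, Equiv.swap_apply_of_ne_of_ne hA' hB']
      rw [hρa] at hlt ⊢
      by_cases hau : π.SameCycle a u
      · exfalso
        rcases hOrn a u hau with h | h
        · rw [h] at hnu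
          exact hnu (SameCycle.refl _ _)
        · omega
      · exact hNX a u v hau (sc0 hAB u v huv) hlt

/-! ### the big cycle -/

open Fin.NatCast in
lemma rot_pow (m : ℕ) : ∀ (k : ℕ) (x : Fin (m + 1)),
    ((finRotate (m + 1)) ^ k) x = x + (k : Fin (m + 1)) := by
  intro k
  induction k with
  | zero => intro x; simp
  | succ k ih =>
    intro x
    rw [pow_succ_apply, ih, finRotate_succ_apply]
    rw [Nat.cast_add, Nat.cast_one, add_assoc]

lemma sc_s (hn : 0 < n) (x y : Fin n) : (finRotate n).SameCycle x y := by
  have hnz : NeZero n := ⟨hn.ne'⟩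
  obtain ⟨m, rfl⟩ : ∃ m, n = m + 1 := ⟨n - 1, by omega⟩
  apply sc_of_pow (dd x y)
  rw [rot_pow]
  rw [dd_val, Fin.cast_val_eq_self]
  abel

lemma cc_s (hn : 0 < n) : Nat.card (Quotient (cyc (finRotate n))) = 1 := by
  have h1 : ∀ q r : Quotient (cyc (finRotate n)), q = r := by
    intro q r
    induction q using Quotient.inductionOn' with
    | h a =>
      induction r using Quotient.inductionOn' with
      | h b => exact Quotient.sound' (sc_s hn a b)
  haveI : Subsingleton (Quotient (cyc (finRotate n))) := ⟨h1⟩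
  haveI : Nonempty (Quotient (cyc (finRotate n))) := ⟨Quotient.mk'' ⟨0, hn⟩⟩
  exact Nat.card_eq_one_iff_unique.mpr ⟨inferInstance, inferInstance⟩

lemma sl_s (hn : 0 < n) : swapLength n (finRotate n) = n - 1 := by
  have h := sl_add_cc (finRotate n)
  rw [cc_s hn] at h
  omega

lemma orn_s (hn : 0 < n) : Orn (finRotate n) := by
  obtain ⟨m, rfl⟩ : ∃ m, n = m + 1 := ⟨n - 1, by omega⟩
  intro a y hy
  rcases eq_or_ne y a with rfl | hne
  · exact Or.inl rfl
  right
  have h1 : dd a (finRotate (m + 1) a) ≤ 1 := by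
    rw [finRotate_succ_apply, dd_val, add_sub_cancel_left]
    rw [Fin.val_one']
    exact Nat.mod_le 1 (m + 1)
  have h2 : 0 < dd a y := dd_pos (Ne.symm hne)
  omega

lemma nx_s (hn : 0 < n) : NX (finRotate n) := by
  intro a u v hnu _ _
  exact absurd (sc_s hn a u) hnu

/-- elements on a geodesic between the identity and the big cycle are
oriented and noncrossing -/
lemma good (hn : 0 < n) : ∀ (m : ℕ) (π : Equiv.Perm (Fin n)),
    swapLength n (π⁻¹ * finRotate n) = m →
    swapLength n π + swapLength n (π⁻¹ * finRotate n) = n - 1 → Orn π ∧ NX π := by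
  intro m
  induction m with
  | zero =>
    intro π h0 _
    have h1 : π⁻¹ * finRotate n = 1 := sl_eq_zero h0
    rw [inv_mul_eq_one] at h1
    rw [h1]
    exact ⟨orn_s hn, nx_s hn⟩
  | succ m ih =>
    intro π hm hsum
    obtain ⟨l, hlen, hsw, hprod⟩ := sl_exists (π⁻¹ * finRotate n)
    rw [hm] at hlen
    cases l with
    | nil => simp at hlen
    | cons t l' =>
      obtain ⟨x, y, hxy, ht⟩ := hsw t List.mem_cons_self
      have hl' : ∀ u ∈ l', u.IsSwap := fun u hu => hsw u (List.mem_cons_of_mem _ hu)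
      have hlen' : l'.length = m := by simpa using hlen
      have hinv : (π * t)⁻¹ * finRotate n = l'.prod := by
        rw [mul_inv_rev, mul_assoc, ← hprod, List.prod_cons, ← mul_assoc,
          inv_mul_cancel, one_mul]
      have hs1 : swapLength n ((π * t)⁻¹ * finRotate n) ≤ m := by
        rw [hinv]
        exact le_trans (sl_le hl' rfl) (le_of_eq hlen')
      have hs2 : swapLength n (π * t) ≤ swapLength n π + 1 := by
        calc swapLength n (π * t) ≤ swapLength n π + swapLength n t := sl_mul_le π t
          _ = swapLength n π + 1 := by rw [ht, sl_swap hxy]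
      have htri : n - 1 ≤ swapLength n (π * t) + swapLength n ((π * t)⁻¹ * finRotate n) := by
        have h3 : (π * t) * ((π * t)⁻¹ * finRotate n) = finRotate n := by
          rw [← mul_assoc, mul_inv_cancel, one_mul]
        calc n - 1 = swapLength n (finRotate n) := (sl_s hn).symm
          _ = swapLength n ((π * t) * ((π * t)⁻¹ * finRotate n)) := by rw [h3]
          _ ≤ _ := sl_mul_le _ _
      have he2 : swapLength n ((π * t)⁻¹ * finRotate n) = m := by omega
      have he1 : swapLength n (π * t) = swapLength n π + 1 := by omega
      obtain ⟨hOrn1, hNX1⟩ := ih (π * t) he2 (by omega)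
      have htt : t * t = 1 := by rw [ht]; exact Equiv.swap_mul_self x y
      have hback : Equiv.swap ((π * t) x) ((π * t) y) * (π * t) = π := by
        rw [Equiv.swap_apply_apply (π * t) x y, inv_mul_cancel_right, mul_assoc, ← ht,
          htt, mul_one]
      have hABne : (π * t) x ≠ (π * t) y := fun h => hxy ((π * t).injective h)
      have hccπ := sl_add_cc π
      have hccπt := sl_add_cc (π * t)
      have happ : ∀ z : Fin n,
          π z = Equiv.swap ((π * t) x) ((π * t) y) ((π * t) z) := by
        intro z
        conv_lhs => rw [← hback]
        rfl
      have hsc : (π * t).SameCycle ((π * t) x) ((π * t) y) := by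
        by_contra hcon
        have hsc2 : π.SameCycle ((π * t) x) ((π * t) y) := by
          have h0 := sc2 (π := π * t) hcon
          rwa [hback] at h0
        have hmerge : ∀ p q, (π * t).SameCycle p q → π.SameCycle p q := by
          apply pointwise_le
          intro z
          have hz : π.SameCycle z (π z) := sc_apply π z
          rcases eq_or_ne ((π * t) z) ((π * t) x) with h1 | h1
          · have hπz : π z = (π * t) y := by
              rw [happ z, h1, Equiv.swap_apply_left]
            rw [h1]
            rw [hπz] at hz
            exact hz.trans hsc2.symm
          rcases eq_or_ne ((π * t) z) ((π * t) y) with h2 | h2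
          · have hπz : π z = (π * t) x := by
              rw [happ z, h2, Equiv.swap_apply_right]
            rw [h2]
            rw [hπz] at hz
            exact hz.trans hsc2
          · have hπz : π z = (π * t) z := by
              rw [happ z, Equiv.swap_apply_of_ne_of_ne h1 h2]
            rw [← hπz]
            exact hz
        have hle := count_le_of_le hmerge
        omega
      have hgs := goodstep hOrn1 hNX1 hsc hABne
      rw [hback] at hgs
      exact hgs

/-! ### the covering step -/

lemma crux {σ τ : Equiv.Perm (Fin n)} (hOrnσ : Orn σ) (hNXσ : NX σ) (hOrnτ : Orn τ)
    (hsub : ∀ i j, σ.SameCycle i j → τ.SameCycle i j) {a : Fin n} (ha : σ a ≠ a) :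
    ∀ i, (Equiv.swap a (σ a) * τ).SameCycle i ((Equiv.swap a (σ a) * σ) i) := by
  have hab_σ : σ.SameCycle a (σ a) := sc_apply σ a
  have hab_τ : τ.SameCycle a (σ a) := hsub _ _ hab_σ
  have hane : a ≠ σ a := Ne.symm ha
  have conn1 : ∀ u, τ.SameCycle a u → dd a u < dd a (σ a) →
      (Equiv.swap a (σ a) * τ).SameCycle a u :=
    cell_conn hOrnτ hab_τ hane
  have conn2 : ∀ u, τ.SameCycle (σ a) u → dd (σ a) u < dd (σ a) a →
      (Equiv.swap a (σ a) * τ).SameCycle (σ a) u := by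
    intro u hu hd
    have h := cell_conn (a := σ a) (b := a) hOrnτ hab_τ.symm ha u hu hd
    rwa [Equiv.swap_comm] at h
  intro i
  rcases eq_or_ne i a with rfl | hia
  · have h0 : (Equiv.swap i (σ i) * σ) i = i := by
      rw [Equiv.Perm.mul_apply, Equiv.swap_apply_right]
    rw [h0]
  rcases eq_or_ne (σ i) a with hia2 | hia2
  · -- σ i = a   :  (t σ) i = σ a
    have h0 : (Equiv.swap a (σ a) * σ) i = σ a := by
      rw [Equiv.Perm.mul_apply, hia2, Equiv.swap_apply_left]
    rw [h0]
    have hiσa : σ.SameCycle a i := by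
      have h1 : σ.SameCycle i a := by
        have := sc_apply σ i
        rwa [hia2] at this
      exact h1.symm
    have hnc1 : ¬ dd a i < dd a (σ a) := by
      rcases hOrnσ a i hiσa with h | h
      · exact absurd h hia
      · omega
    have hcell2 : dd (σ a) i < dd (σ a) a := by
      rcases dd_dichotomy hane i with h | h
      · exact absurd h hnc1
      · exact h
    exact (conn2 i (hab_τ.symm.trans (hsub _ _ hiσa)) hcell2).symm
  · -- σ i ≠ a and i ≠ a
    have hσib : σ i ≠ σ a := fun h => hia (σ.injective h)
    have h0 : (Equiv.swap a (σ a) * σ) i = σ i := by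
      rw [Equiv.Perm.mul_apply, Equiv.swap_apply_of_ne_of_ne hia2 hσib]
    rw [h0]
    have hiσi : σ.SameCycle i (σ i) := sc_apply σ i
    by_cases hiC : τ.SameCycle a i
    · by_cases hiσ : σ.SameCycle a i
      · -- same σ-orbit as a : both i and σ i are in cell 2
        have hnc1 : ¬ dd a i < dd a (σ a) := by
          rcases hOrnσ a i hiσ with h | h
          · exact absurd h hia
          · omega
        have hcell2i : dd (σ a) i < dd (σ a) a := by
          rcases dd_dichotomy hane i with h | h
          · exact absurd h hnc1
          · exact h
        have hσia : σ.SameCycle a (σ i) := hiσ.trans hiσi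
        have hnc2 : ¬ dd a (σ i) < dd a (σ a) := by
          rcases hOrnσ a (σ i) hσia with h | h
          · exact absurd h hia2
          · omega
        have hcell2σi : dd (σ a) (σ i) < dd (σ a) a := by
          rcases dd_dichotomy hane (σ i) with h | h
          · exact absurd h hnc2
          · exact h
        have h1 := conn2 i (hab_τ.symm.trans hiC) hcell2i
        have h2 := conn2 (σ i) (hab_τ.symm.trans (hiC.trans (hsub _ _ hiσi))) hcell2σi
        exact h1.symm.trans h2
      · -- different σ-orbit
        by_cases hcell : dd a i < dd a (σ a)
        · have hσicell : dd a (σ i) < dd a (σ a) :=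
            hNXσ a i (σ i) (fun h => hiσ h) hiσi hcell
          have h1 := conn1 i hiC hcell
          have h2 := conn1 (σ i) (hiC.trans (hsub _ _ hiσi)) hσicell
          exact h1.symm.trans h2
        · have hσnc : ¬ dd a (σ i) < dd a (σ a) := by
            intro h
            exact hcell (hNXσ a (σ i) i
              (fun h' => hiσ (h'.trans hiσi.symm)) hiσi.symm h)
          have hcell2i : dd (σ a) i < dd (σ a) a := by
            rcases dd_dichotomy hane i with h | h
            · exact absurd h hcell
            · exact h
          have hcell2σi : dd (σ a) (σ i) < dd (σ a) a := by
            rcases dd_dichotomy hane (σ i) with h | h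
            · exact absurd h hσnc
            · exact h
          have h1 := conn2 i (hab_τ.symm.trans hiC) hcell2i
          have h2 := conn2 (σ i) (hab_τ.symm.trans (hiC.trans (hsub _ _ hiσi))) hcell2σi
          exact h1.symm.trans h2
    · -- τ-orbit of i does not contain a : untouched
      have hwa : ¬ τ.SameCycle i a := fun h => hiC h.symm
      have hwb : ¬ τ.SameCycle i (σ a) := fun h => hiC (h.trans hab_τ.symm).symm
      exact out_conn hwa hwb (hsub _ _ hiσi)

lemma main_induction (hn : 0 < n) : ∀ (k : ℕ) (σ τ : Equiv.Perm (Fin n)),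
    swapLength n σ = k →
    swapLength n σ + swapLength n (σ⁻¹ * finRotate n) = n - 1 →
    swapLength n τ + swapLength n (τ⁻¹ * finRotate n) = n - 1 →
    (∀ i j, σ.SameCycle i j → τ.SameCycle i j) →
    orbitCount n σ = orbitCount n τ + 1 →
    ∃ a b : Fin n, a ≠ b ∧ τ * σ⁻¹ = Equiv.swap a b := by
  intro k
  induction k using Nat.strong_induction_on with
  | _ k IH =>
  intro σ τ hk hσ hτ hsub hc
  have hccσ := sl_add_cc σ
  have hccτ := sl_add_cc τ
  rw [orbitCount_eq, orbitCount_eq] at hc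
  rcases Nat.eq_zero_or_pos k with rfl | hkpos
  · -- base case : σ = 1, τ is a single swap
    have hσ1 : σ = 1 := sl_eq_zero hk
    have hslτ : swapLength n τ = 1 := by
      have e1 : Nat.card (Quotient (cyc σ)) = n := by rw [hσ1]; exact cc_one
      omega
    obtain ⟨l, hlen, hsw, hprod⟩ := sl_exists τ
    rw [hslτ] at hlen
    cases l with
    | nil => simp at hlen
    | cons t l' =>
      have hl0 : l' = [] := by
        rw [List.length_cons] at hlen
        exact List.length_eq_zero_iff.mp (by omega)
      obtain ⟨p, q, hpq, htp⟩ := hsw t List.mem_cons_self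
      refine ⟨p, q, hpq, ?_⟩
      rw [hσ1]
      simp only [inv_one, mul_one]
      rw [← hprod, hl0, ← htp]
      simp
  · -- inductive step
    have hσ1 : σ ≠ 1 := fun h => by rw [h, sl_one] at hk; omega
    have hex : ∃ a, σ a ≠ a := by
      by_contra hcon
      push_neg at hcon
      exact hσ1 (Equiv.ext hcon)
    obtain ⟨a, ha⟩ := hex
    obtain ⟨hOrnσ, hNXσ⟩ := good hn (swapLength n (σ⁻¹ * finRotate n)) σ rfl hσ
    obtain ⟨hOrnτ, hNXτ⟩ := good hn (swapLength n (τ⁻¹ * finRotate n)) τ rfl hτ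
    have hab_σ : σ.SameCycle a (σ a) := sc_apply σ a
    have hab_τ : τ.SameCycle a (σ a) := hsub _ _ hab_σ
    have hane : a ≠ σ a := Ne.symm ha
    have hccσ' := sl_add_cc (Equiv.swap a (σ a) * σ)
    have hccτ' := sl_add_cc (Equiv.swap a (σ a) * τ)
    have hsplitσ : Nat.card (Quotient (cyc σ)) <
        Nat.card (Quotient (cyc (Equiv.swap a (σ a) * σ))) :=
      count_lt_of_split (sc0 hab_σ) hab_σ (sc1 hab_σ hane)
    have hsplitτ : Nat.card (Quotient (cyc τ)) <
        Nat.card (Quotient (cyc (Equiv.swap a (σ a) * τ))) :=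
      count_lt_of_split (sc0 hab_τ) hab_τ (sc1 hab_τ hane)
    have hcc'σle := cc_le (Equiv.swap a (σ a) * σ)
    have hcc'τle := cc_le (Equiv.swap a (σ a) * τ)
    -- factorization of the inverse side
    have hfact : ∀ ρ : Equiv.Perm (Fin n), (Equiv.swap a (σ a) * ρ)⁻¹ * finRotate n =
        (ρ⁻¹ * finRotate n) *
          Equiv.swap ((finRotate n)⁻¹ a) ((finRotate n)⁻¹ (σ a)) := by
      intro ρ
      rw [Equiv.swap_apply_apply (finRotate n)⁻¹ a (σ a), mul_inv_rev, Equiv.swap_inv]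
      group
    have hinvne : (finRotate n)⁻¹ a ≠ (finRotate n)⁻¹ (σ a) :=
      fun h => hane (((finRotate n)⁻¹).injective h)
    have hsinvσ : swapLength n ((Equiv.swap a (σ a) * σ)⁻¹ * finRotate n) ≤
        swapLength n (σ⁻¹ * finRotate n) + 1 := by
      rw [hfact σ]
      refine le_trans (sl_mul_le _ _) ?_
      rw [sl_swap hinvne]
    have hsinvτ : swapLength n ((Equiv.swap a (σ a) * τ)⁻¹ * finRotate n) ≤
        swapLength n (τ⁻¹ * finRotate n) + 1 := by
      rw [hfact τ]
      refine le_trans (sl_mul_le _ _) ?_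
      rw [sl_swap hinvne]
    have htriσ : n - 1 ≤ swapLength n (Equiv.swap a (σ a) * σ) +
        swapLength n ((Equiv.swap a (σ a) * σ)⁻¹ * finRotate n) := by
      have h3 : (Equiv.swap a (σ a) * σ) * ((Equiv.swap a (σ a) * σ)⁻¹ * finRotate n) =
          finRotate n := by
        rw [← mul_assoc, mul_inv_cancel, one_mul]
      have h4 := sl_mul_le (Equiv.swap a (σ a) * σ) ((Equiv.swap a (σ a) * σ)⁻¹ * finRotate n)
      rw [h3, sl_s hn] at h4
      exact h4
    have htriτ : n - 1 ≤ swapLength n (Equiv.swap a (σ a) * τ) +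
        swapLength n ((Equiv.swap a (σ a) * τ)⁻¹ * finRotate n) := by
      have h3 : (Equiv.swap a (σ a) * τ) * ((Equiv.swap a (σ a) * τ)⁻¹ * finRotate n) =
          finRotate n := by
        rw [← mul_assoc, mul_inv_cancel, one_mul]
      have h4 := sl_mul_le (Equiv.swap a (σ a) * τ) ((Equiv.swap a (σ a) * τ)⁻¹ * finRotate n)
      rw [h3, sl_s hn] at h4
      exact h4
    have hccnσ := cc_le σ
    have hccnτ := cc_le τ
    -- all length equalities
    have heσ : swapLength n (Equiv.swap a (σ a) * σ) = k - 1 := by omega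
    have heσs : swapLength n (Equiv.swap a (σ a) * σ) +
        swapLength n ((Equiv.swap a (σ a) * σ)⁻¹ * finRotate n) = n - 1 := by omega
    have heτs : swapLength n (Equiv.swap a (σ a) * τ) +
        swapLength n ((Equiv.swap a (σ a) * τ)⁻¹ * finRotate n) = n - 1 := by omega
    have hc' : orbitCount n (Equiv.swap a (σ a) * σ) =
        orbitCount n (Equiv.swap a (σ a) * τ) + 1 := by
      rw [orbitCount_eq, orbitCount_eq]
      omega
    have hsub' : ∀ i j, (Equiv.swap a (σ a) * σ).SameCycle i j →
        (Equiv.swap a (σ a) * τ).SameCycle i j :=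
      pointwise_le (crux hOrnσ hNXσ hOrnτ hsub ha)
    obtain ⟨p, q, hpq, heq⟩ := IH (k - 1) (by omega) (Equiv.swap a (σ a) * σ)
      (Equiv.swap a (σ a) * τ) heσ heσs heτs hsub' (by
        rw [orbitCount_eq, orbitCount_eq] at hc' ⊢
        exact hc')
    refine ⟨Equiv.swap a (σ a) p, Equiv.swap a (σ a) q,
      fun h => hpq ((Equiv.swap a (σ a)).injective h), ?_⟩
    have h5 : τ * σ⁻¹ = (Equiv.swap a (σ a))⁻¹ *
        ((Equiv.swap a (σ a) * τ) * (Equiv.swap a (σ a) * σ)⁻¹) * Equiv.swap a (σ a) := by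
      group
    rw [heq] at h5
    rw [h5, Equiv.swap_inv]
    rw [Equiv.swap_apply_apply (Equiv.swap a (σ a)) p q, Equiv.swap_inv]

end NC

/-- If `σ` and `τ` lie in the interval from `e` to `s`, every `σ`-orbit is
contained in a `τ`-orbit, and the orbit partition of `σ` has exactly one more
block than that of `τ`, then `τ * σ⁻¹` is a transposition; in particular `σ`
and `τ` are at distance one in the Cayley graph. -/
theorem covering_is_edge (n : ℕ) (hn : 1 ≤ n) (σ τ : Equiv.Perm (Fin n))
    (hσ : swapLength n σ + swapLength n (σ⁻¹ * finRotate n) = n - 1)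
    (hτ : swapLength n τ + swapLength n (τ⁻¹ * finRotate n) = n - 1)
    (hsub : ∀ i j : Fin n, σ.SameCycle i j → τ.SameCycle i j)
    (hc : orbitCount n σ = orbitCount n τ + 1) :
    (∃ a b : Fin n, a ≠ b ∧ τ * σ⁻¹ = Equiv.swap a b) ∧
      swapLength n (σ⁻¹ * τ) = 1 := by
  obtain ⟨a, b, hab, heq⟩ :=
    NC.main_induction hn (swapLength n σ) σ τ rfl hσ hτ hsub hc
  refine ⟨⟨a, b, hab, heq⟩, ?_⟩
  have h1 : σ⁻¹ * τ = σ⁻¹ * (τ * σ⁻¹) * σ := by group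
  rw [heq] at h1
  have h2 : Equiv.swap (σ⁻¹ a) (σ⁻¹ b) = σ⁻¹ * Equiv.swap a b * σ := by
    have := Equiv.swap_apply_apply σ⁻¹ a b
    rwa [inv_inv] at this
  rw [h1, ← h2]
  exact NC.sl_swap (fun h => hab (σ⁻¹.injective h))
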